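/- arXiv:1212.0029 — 9 statements merged into one kernel-verified Lean document; each statement's English description precedes it below -/
import Mathlib

section
/- Let A be a 4×4 complex Hermitian matrix such that z* A z ≥ 0 for all z ∈ ℂ⁴ with z₁z₄ + z₂z₃ = 0. Then ∑_{j,k=1}^{4} A_{jk} · A_{5-j,5-k} ≥ 0 (this sum is real). -/
open Complex BigOperators ComplexOrder


private lemma disc_aux (P B : ℝ) (K : ℂ)
    (h : ∀ a b : ℂ, 0 ≤ P * normSq a + 2 * (K * ((starRingEnd ℂ) a * b)).re + B * normSq b) :
    normSq K ≤ P * B := by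
  have hP : 0 ≤ P := by simpa using h 1 0
  have hB : 0 ≤ B := by simpa using h 0 1
  rcases hB.lt_or_eq with hBpos | hB0
  · have h2 := h (B : ℂ) (-((starRingEnd ℂ) K))
    have e1 : P * normSq ((B : ℝ) : ℂ) + 2 * (K * ((starRingEnd ℂ) ((B:ℝ):ℂ) * (-((starRingEnd ℂ) K)))).re
        + B * normSq (-((starRingEnd ℂ) K)) = B * (P * B - normSq K) := by
      simp only [Complex.normSq_apply, Complex.mul_re, Complex.mul_im, Complex.neg_re,
        Complex.neg_im, Complex.conj_re, Complex.conj_im, Complex.ofReal_re, Complex.ofReal_im]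
      ring
    rw [e1] at h2
    nlinarith [h2, hBpos]
  · have hK0 : normSq K = 0 := by
      by_contra hne
      have hKpos : 0 < normSq K := lt_of_le_of_ne (normSq_nonneg K) (Ne.symm hne)
      have h3 := h 1 (-((((P+1)/(2*normSq K)) : ℝ) : ℂ) * (starRingEnd ℂ) K)
      have e3 : P * normSq (1:ℂ) + 2 * (K * ((starRingEnd ℂ) (1:ℂ) * (-((((P+1)/(2*normSq K)) : ℝ) : ℂ) * (starRingEnd ℂ) K))).re
          + B * normSq (-((((P+1)/(2*normSq K)) : ℝ) : ℂ) * (starRingEnd ℂ) K)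
          = P - 2*((P+1)/(2*normSq K))*normSq K + B * ((P+1)/(2*normSq K))^2 * normSq K := by
        simp only [Complex.normSq_apply, Complex.mul_re, Complex.mul_im, Complex.neg_re,
          Complex.neg_im, Complex.conj_re, Complex.conj_im, Complex.ofReal_re, Complex.ofReal_im,
          Complex.one_re, Complex.one_im]
        ring
      rw [e3, ← hB0] at h3
      have hcanc : 2*((P+1)/(2*normSq K))*normSq K = P + 1 := by
        field_simp
      rw [hcanc] at h3
      norm_num at h3
    rw [hK0, ← hB0, mul_zero]

private lemma core2 (α β γ δ : ℝ) (p q1 q2 q3 q4 r : ℂ)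
    (hα : 0 < α) (hγ : 0 < γ)
    (he : 0 < α*β - normSq p) (hdR : 0 < γ*δ - normSq r)
    (hq : ∀ a b c d : ℂ, 0 ≤
      α * normSq (a*c) + β * normSq (a*d) + γ * normSq (b*c) + δ * normSq (b*d)
      + 2 * (p * ((starRingEnd ℂ) (a*c) * (a*d))).re
      + 2 * (q1 * ((starRingEnd ℂ) (a*c) * (b*c))).re
      - 2 * (q2 * ((starRingEnd ℂ) (a*c) * (b*d))).re
      + 2 * (q3 * ((starRingEnd ℂ) (a*d) * (b*c))).re
      - 2 * (q4 * ((starRingEnd ℂ) (a*d) * (b*d))).re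
      - 2 * (r * ((starRingEnd ℂ) (b*c) * (b*d))).re) :
    0 ≤ α*δ + β*γ + 2*(p * (starRingEnd ℂ) r).re + normSq q2 + normSq q3
       + 2*(q1 * (starRingEnd ℂ) q4).re := by
  have h1 : normSq q1 ≤ α * γ := by
    apply disc_aux
    intro a b
    have h := hq a b 1 0
    simp only [Complex.normSq_apply, Complex.add_re, Complex.add_im, Complex.mul_re,
      Complex.mul_im, Complex.sub_re, Complex.sub_im, Complex.neg_re, Complex.neg_im,
      Complex.conj_re, Complex.conj_im, Complex.ofReal_re, Complex.ofReal_im,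
      Complex.one_re, Complex.one_im, Complex.zero_re, Complex.zero_im] at h ⊢
    linarith
  have hRvpos : 0 < γ*normSq p + 2*α*((starRingEnd ℂ) p * r).re + δ*(α*α) := by
    have hid : γ * (γ*normSq p + 2*α*((starRingEnd ℂ) p * r).re + δ*(α*α))
        = normSq ((α:ℂ) * r + (γ:ℂ) * p) + (γ*δ - normSq r)*(α*α) := by
      simp only [Complex.normSq_apply, Complex.add_re, Complex.add_im, Complex.mul_re,
        Complex.mul_im, Complex.sub_re, Complex.sub_im, Complex.neg_re, Complex.neg_im,
        Complex.conj_re, Complex.conj_im, Complex.ofReal_re, Complex.ofReal_im]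
      ring
    nlinarith [normSq_nonneg ((α:ℂ) * r + (γ:ℂ) * p), mul_pos hdR (mul_pos hα hα), hγ, hid]
  have hfam : ∀ a b : ℂ, 0 ≤ (α*(α*β - normSq p)) * normSq a
      + 2 * (((((normSq p : ℝ)):ℂ) * q1 + (α:ℂ) * (starRingEnd ℂ) p * q2 - (α:ℂ) * p * q3
          - (α:ℂ)*(α:ℂ) * q4) * ((starRingEnd ℂ) a * b)).re
      + (γ*normSq p + 2*α*((starRingEnd ℂ) p * r).re + δ*(α*α)) * normSq b := by
    intro a b
    have h := hq a b (-p) ((α : ℝ) : ℂ)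
    simp only [Complex.normSq_apply, Complex.add_re, Complex.add_im, Complex.mul_re,
      Complex.mul_im, Complex.sub_re, Complex.sub_im, Complex.neg_re, Complex.neg_im,
      Complex.conj_re, Complex.conj_im, Complex.ofReal_re, Complex.ofReal_im] at h ⊢
    linarith
  have h2 := disc_aux _ _ _ hfam
  have hIII : (α*δ + β*γ + 2*(p * (starRingEnd ℂ) r).re + normSq q2 + normSq q3
        + 2*(q1 * (starRingEnd ℂ) q4).re) * ((α*α)*(α*β - normSq p))
      = (α*γ - normSq q1) * ((α*β - normSq p)*(α*β - normSq p))
      + ((α*(α*β - normSq p)) * (γ*normSq p + 2*α*((starRingEnd ℂ) p * r).re + δ*(α*α))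
         - normSq ((((normSq p : ℝ)):ℂ) * q1 + (α:ℂ) * (starRingEnd ℂ) p * q2 - (α:ℂ) * p * q3
          - (α:ℂ)*(α:ℂ) * q4))
      + (α*β - normSq p) * (normSq ((α:ℂ)*q2 + p*q1) + normSq ((α:ℂ)*q3 - (starRingEnd ℂ) p * q1))
      + normSq (((α*β - normSq p : ℝ):ℂ) * q1 - ((((normSq p : ℝ)):ℂ) * q1
          + (α:ℂ) * (starRingEnd ℂ) p * q2 - (α:ℂ) * p * q3 - (α:ℂ)*(α:ℂ) * q4)) := by
    simp only [Complex.normSq_apply, Complex.add_re, Complex.add_im, Complex.mul_re,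
      Complex.mul_im, Complex.sub_re, Complex.sub_im, Complex.neg_re, Complex.neg_im,
      Complex.conj_re, Complex.conj_im, Complex.ofReal_re, Complex.ofReal_im]
    ring
  have hsum : 0 ≤ (α*δ + β*γ + 2*(p * (starRingEnd ℂ) r).re + normSq q2 + normSq q3
        + 2*(q1 * (starRingEnd ℂ) q4).re) * ((α*α)*(α*β - normSq p)) := by
    rw [hIII]
    have t1 : 0 ≤ (α*γ - normSq q1) * ((α*β - normSq p)*(α*β - normSq p)) :=
      mul_nonneg (by linarith) (mul_self_nonneg _)
    have t3 : 0 ≤ (α*β - normSq p) * (normSq ((α:ℂ)*q2 + p*q1)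
        + normSq ((α:ℂ)*q3 - (starRingEnd ℂ) p * q1)) :=
      mul_nonneg he.le (add_nonneg (normSq_nonneg _) (normSq_nonneg _))
    have t4 := normSq_nonneg (((α*β - normSq p : ℝ):ℂ) * q1 - ((((normSq p : ℝ)):ℂ) * q1
          + (α:ℂ) * (starRingEnd ℂ) p * q2 - (α:ℂ) * p * q3 - (α:ℂ)*(α:ℂ) * q4))
    linarith [h2]
  have hcpos : 0 < (α*α)*(α*β - normSq p) := mul_pos (mul_pos hα hα) he
  nlinarith [hsum, hcpos]

private lemma limit_aux (T c : ℝ) (hc : 0 ≤ c)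
    (h : ∀ ε : ℝ, 0 < ε → 0 ≤ T + c*ε + 2*ε^2) : 0 ≤ T := by
  by_contra hneg
  push_neg at hneg
  have hd : 0 < c + 2 := by linarith
  have hε : 0 < min 1 (-T/(2*(c+2))) := lt_min one_pos (div_pos (by linarith) (by linarith))
  have h1' : min 1 (-T/(2*(c+2))) ≤ 1 := min_le_left _ _
  have h2' : min 1 (-T/(2*(c+2))) * (2*(c+2)) ≤ -T := by
    rw [← le_div_iff₀ (by linarith)]
    exact min_le_right _ _
  have hk := h _ hε
  nlinarith [hk, h1', h2', hε, mul_le_mul_of_nonneg_left h1' hε.le]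

private lemma core0 (α β γ δ : ℝ) (p q1 q2 q3 q4 r : ℂ)
    (hq : ∀ a b c d : ℂ, 0 ≤
      α * normSq (a*c) + β * normSq (a*d) + γ * normSq (b*c) + δ * normSq (b*d)
      + 2 * (p * ((starRingEnd ℂ) (a*c) * (a*d))).re
      + 2 * (q1 * ((starRingEnd ℂ) (a*c) * (b*c))).re
      - 2 * (q2 * ((starRingEnd ℂ) (a*c) * (b*d))).re
      + 2 * (q3 * ((starRingEnd ℂ) (a*d) * (b*c))).re
      - 2 * (q4 * ((starRingEnd ℂ) (a*d) * (b*d))).re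
      - 2 * (r * ((starRingEnd ℂ) (b*c) * (b*d))).re) :
    0 ≤ α*δ + β*γ + 2*(p * (starRingEnd ℂ) r).re + normSq q2 + normSq q3
       + 2*(q1 * (starRingEnd ℂ) q4).re := by
  have hα : 0 ≤ α := by simpa using hq 1 0 1 0
  have hβ : 0 ≤ β := by simpa using hq 1 0 0 1
  have hγ : 0 ≤ γ := by simpa using hq 0 1 1 0
  have hδ : 0 ≤ δ := by simpa using hq 0 1 0 1
  have hp : normSq p ≤ α * β := by
    apply disc_aux
    intro a b
    have h := hq 1 0 a b
    simp only [Complex.normSq_apply, Complex.add_re, Complex.add_im, Complex.mul_re,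
      Complex.mul_im, Complex.sub_re, Complex.sub_im, Complex.neg_re, Complex.neg_im,
      Complex.conj_re, Complex.conj_im, Complex.ofReal_re, Complex.ofReal_im,
      Complex.one_re, Complex.one_im, Complex.zero_re, Complex.zero_im] at h ⊢
    linarith
  have hr : normSq r ≤ γ * δ := by
    have h' : normSq (-r) ≤ γ * δ := by
      apply disc_aux
      intro a b
      have h := hq 0 1 a b
      simp only [Complex.normSq_apply, Complex.add_re, Complex.add_im, Complex.mul_re,
        Complex.mul_im, Complex.sub_re, Complex.sub_im, Complex.neg_re, Complex.neg_im,
        Complex.conj_re, Complex.conj_im, Complex.ofReal_re, Complex.ofReal_im,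
        Complex.one_re, Complex.one_im, Complex.zero_re, Complex.zero_im] at h ⊢
      linarith
    simpa [Complex.normSq_neg] using h'
  have key : ∀ ε : ℝ, 0 < ε →
      0 ≤ (α+ε)*(δ+ε) + (β+ε)*(γ+ε) + 2*(p * (starRingEnd ℂ) r).re + normSq q2 + normSq q3
        + 2*(q1 * (starRingEnd ℂ) q4).re := by
    intro ε hε
    apply core2 (α+ε) (β+ε) (γ+ε) (δ+ε) p q1 q2 q3 q4 r (by linarith) (by linarith)
      (by nlinarith [hp, mul_pos hε hε, mul_nonneg hα hε.le, mul_nonneg hβ hε.le])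
      (by nlinarith [hr, mul_pos hε hε, mul_nonneg hγ hε.le, mul_nonneg hδ hε.le])
    intro a b c d
    have h := hq a b c d
    nlinarith [mul_nonneg hε.le (normSq_nonneg (a*c)), mul_nonneg hε.le (normSq_nonneg (a*d)),
      mul_nonneg hε.le (normSq_nonneg (b*c)), mul_nonneg hε.le (normSq_nonneg (b*d)), h]
  apply limit_aux _ (α+β+γ+δ) (by linarith)
  intro ε hε
  have hk := key ε hε
  nlinarith [hk]

theorem stmt_1 (A : Matrix (Fin 4) (Fin 4) ℂ) (hA : A.IsHermitian)
    (hpos : ∀ z : Fin 4 → ℂ, z 0 * z 3 + z 1 * z 2 = 0 →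
      0 ≤ ∑ j, ∑ k, (starRingEnd ℂ) (z j) * A j k * z k) :
    0 ≤ ∑ j, ∑ k, A j k * A j.rev k.rev := by
  have d0 : A 0 0 = ((A 0 0).re : ℂ) := (Complex.conj_eq_iff_re.mp (hA.apply 0 0)).symm
  have d1 : A 1 1 = ((A 1 1).re : ℂ) := (Complex.conj_eq_iff_re.mp (hA.apply 1 1)).symm
  have d2 : A 2 2 = ((A 2 2).re : ℂ) := (Complex.conj_eq_iff_re.mp (hA.apply 2 2)).symm
  have d3 : A 3 3 = ((A 3 3).re : ℂ) := (Complex.conj_eq_iff_re.mp (hA.apply 3 3)).symm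
  have e10 : A 1 0 = (starRingEnd ℂ) (A 0 1) := (hA.apply 1 0).symm
  have e20 : A 2 0 = (starRingEnd ℂ) (A 0 2) := (hA.apply 2 0).symm
  have e30 : A 3 0 = (starRingEnd ℂ) (A 0 3) := (hA.apply 3 0).symm
  have e21 : A 2 1 = (starRingEnd ℂ) (A 1 2) := (hA.apply 2 1).symm
  have e31 : A 3 1 = (starRingEnd ℂ) (A 1 3) := (hA.apply 3 1).symm
  have e32 : A 3 2 = (starRingEnd ℂ) (A 2 3) := (hA.apply 3 2).symm
  have hqmain : ∀ a b c d : ℂ, 0 ≤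
      (A 0 0).re * normSq (a*c) + (A 1 1).re * normSq (a*d) + (A 2 2).re * normSq (b*c)
      + (A 3 3).re * normSq (b*d)
      + 2 * ((A 0 1) * ((starRingEnd ℂ) (a*c) * (a*d))).re
      + 2 * ((A 0 2) * ((starRingEnd ℂ) (a*c) * (b*c))).re
      - 2 * ((A 0 3) * ((starRingEnd ℂ) (a*c) * (b*d))).re
      + 2 * ((A 1 2) * ((starRingEnd ℂ) (a*d) * (b*c))).re
      - 2 * ((A 1 3) * ((starRingEnd ℂ) (a*d) * (b*d))).re
      - 2 * ((A 2 3) * ((starRingEnd ℂ) (b*c) * (b*d))).re := by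
    intro a b c d
    have H := hpos ![a*c, a*d, b*c, -(b*d)] (by
      simp only [Matrix.cons_val_zero, Matrix.cons_val_one, Matrix.head_cons,
        Matrix.cons_val_two, Matrix.tail_cons, Matrix.cons_val_three]
      ring)
    have H1 : (0:ℝ) ≤ (∑ j, ∑ k, (starRingEnd ℂ) ((![a*c, a*d, b*c, -(b*d)]) j) * A j k
        * (![a*c, a*d, b*c, -(b*d)]) k).re := by
      simpa using (Complex.le_def.mp H).1
    simp only [Fin.sum_univ_four, Matrix.cons_val_zero, Matrix.cons_val_one, Matrix.head_cons,
      Matrix.cons_val_two, Matrix.tail_cons, Matrix.cons_val_three] at H1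
    rw [d0, d1, d2, d3, e10, e20, e30, e21, e31, e32] at H1
    simp only [Complex.normSq_apply, Complex.add_re, Complex.add_im, Complex.mul_re,
      Complex.mul_im, Complex.sub_re, Complex.sub_im, Complex.neg_re, Complex.neg_im,
      Complex.conj_re, Complex.conj_im, Complex.ofReal_re, Complex.ofReal_im,
      Complex.zero_re, Complex.zero_im] at H1 ⊢
    linarith
  have hcore := core0 (A 0 0).re (A 1 1).re (A 2 2).re (A 3 3).re
    (A 0 1) (A 0 2) (A 0 3) (A 1 2) (A 1 3) (A 2 3) hqmain
  have r0 : (0:Fin 4).rev = 3 := rfl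
  have r1 : (1:Fin 4).rev = 2 := rfl
  have r2 : (2:Fin 4).rev = 1 := rfl
  have r3 : (3:Fin 4).rev = 0 := rfl
  refine Complex.le_def.mpr ⟨?_, ?_⟩
  · simp only [Fin.sum_univ_four, r0, r1, r2, r3]
    rw [d0, d1, d2, d3, e10, e20, e30, e21, e31, e32]
    simp only [Complex.normSq_apply, Complex.add_re, Complex.add_im, Complex.mul_re,
      Complex.mul_im, Complex.sub_re, Complex.sub_im, Complex.neg_re, Complex.neg_im,
      Complex.conj_re, Complex.conj_im, Complex.ofReal_re, Complex.ofReal_im,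
      Complex.zero_re, Complex.zero_im] at hcore ⊢
    linarith
  · simp only [Fin.sum_univ_four, r0, r1, r2, r3]
    rw [d0, d1, d2, d3, e10, e20, e30, e21, e31, e32]
    simp only [Complex.add_re, Complex.add_im, Complex.mul_re,
      Complex.mul_im, Complex.neg_re, Complex.neg_im,
      Complex.conj_re, Complex.conj_im, Complex.ofReal_re, Complex.ofReal_im,
      Complex.zero_re, Complex.zero_im]
    ring
end

section
/- Let A be a 4×4 complex Hermitian matrix as above. Then z* A z ≥ 0 for all z on the quadric {z₁z₄ + z₂z₃ = 0} if and only if: λ_j ≥ 0 for all j; |a| ≤ √(λ₁λ₂), |b| ≤ √(λ₁λ₃), |c| ≤ √(λ₂λ₄), |d| ≤ √(λ₃λ₄); and for every ζ ∈ ℂ, |b − αζ + βζ̄ + c|ζ|²|² ≤ (λ₁ + 2Re(aζ) + λ₂|ζ|²)(λ₃ + 2Re(dζ) + λ₄|ζ|²). -/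
open Complex BigOperators ComplexOrder

noncomputable def Ereal (l₁ l₂ l₃ l₄ : ℝ) (a b c d α β : ℂ) (z : Fin 4 → ℂ) : ℝ :=
  l₁ * Complex.normSq (z 0) + l₂ * Complex.normSq (z 1) + l₃ * Complex.normSq (z 2)
    + l₄ * Complex.normSq (z 3)
  + 2 * (a * (starRingEnd ℂ) (z 0) * z 1).re + 2 * (b * (starRingEnd ℂ) (z 0) * z 2).re
  + 2 * (α * (starRingEnd ℂ) (z 0) * z 3).re + 2 * (β * (starRingEnd ℂ) (z 1) * z 2).re
  - 2 * (c * (starRingEnd ℂ) (z 1) * z 3).re - 2 * (d * (starRingEnd ℂ) (z 2) * z 3).re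

lemma sum_eq (l₁ l₂ l₃ l₄ : ℝ) (a b c d α β : ℂ) (z : Fin 4 → ℂ) :
    (∑ j, ∑ k, (starRingEnd ℂ) (z j) *
      (!![(l₁ : ℂ), a, b, α;
          (starRingEnd ℂ) a, (l₂ : ℂ), β, -c;
          (starRingEnd ℂ) b, (starRingEnd ℂ) β, (l₃ : ℂ), -d;
          (starRingEnd ℂ) α, -(starRingEnd ℂ) c, -(starRingEnd ℂ) d, (l₄ : ℂ)]) j k * z k)
      = ((Ereal l₁ l₂ l₃ l₄ a b c d α β z : ℝ) : ℂ) := by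
  simp only [Fin.sum_univ_four, Matrix.cons_val', Matrix.cons_val_zero, Matrix.cons_val_one,
    Matrix.head_cons, Matrix.empty_val', Matrix.cons_val_fin_one, Matrix.head_fin_const,
    Matrix.cons_val_two, Matrix.tail_cons, Matrix.cons_val_three]
  apply Complex.ext <;>
    simp [Ereal, Complex.normSq_apply, Complex.add_re, Complex.mul_re, Complex.mul_im,
      Complex.conj_re, Complex.conj_im, Complex.add_im, Complex.ofReal_re, Complex.ofReal_im,
      Complex.sub_re, Complex.sub_im, Complex.neg_re, Complex.neg_im] <;> ring

lemma key2 (P R : ℝ) (S : ℂ)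
    (h : ∀ u v : ℂ, 0 ≤ P * Complex.normSq u + R * Complex.normSq v
      + 2 * (S * (starRingEnd ℂ) u * v).re) :
    ‖S‖ ^ 2 ≤ P * R := by
  by_cases hS : S = 0
  · simp [hS]
    have h1 := h 1 0
    have h2 := h 0 1
    simp at h1 h2
    exact mul_nonneg h1 h2
  · have habs : 0 < ‖S‖ := norm_pos_iff.mpr hS
    have key : ∀ t : ℝ, 0 ≤ P * (t * t) + (-(2 * ‖S‖)) * t + R := by
      intro t
      have := h (t : ℂ) (-(starRingEnd ℂ) S / ‖S‖)
      have hn1 : Complex.normSq ((t : ℝ) : ℂ) = t * t := by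
        simp [Complex.normSq_apply]
      have hn2 : Complex.normSq (-(starRingEnd ℂ) S / ‖S‖) = 1 := by
        simp [Complex.normSq_div, Complex.normSq_conj]
        rw [Complex.normSq_eq_norm_sq]
        rw [sq]
        field_simp
      have hre : (S * (starRingEnd ℂ) ((t : ℝ) : ℂ) * (-(starRingEnd ℂ) S / ‖S‖)).re
          = -(‖S‖ * t) := by
        rw [Complex.conj_ofReal]
        have : S * (t : ℂ) * (-(starRingEnd ℂ) S / ‖S‖)
            = -((S * (starRingEnd ℂ) S) * t / ‖S‖) := by ring
        rw [this, Complex.mul_conj]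
        rw [Complex.normSq_eq_norm_sq]
        have : ((‖S‖ ^ 2 : ℝ) : ℂ) * (t:ℂ) / (‖S‖ : ℂ)
            = ((‖S‖ * t : ℝ) : ℂ) := by
          push_cast
          field_simp
        rw [this]
        simp
      rw [hn1, hn2, hre] at this
      linarith
    have := discrim_le_zero key
    rw [discrim] at this
    rw [Complex.sq_norm] at *
    nlinarith [Complex.normSq_nonneg S, Complex.sq_norm S]

lemma final2 (P R : ℝ) (T u v : ℂ) (hP : 0 ≤ P) (hR : 0 ≤ R)
    (hT : ‖T‖ ^ 2 ≤ P * R) :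
    0 ≤ P * Complex.normSq u + R * Complex.normSq v + 2 * (T * (starRingEnd ℂ) u * v).re := by
  have h1 : (T * (starRingEnd ℂ) u * v).re ≥ -(‖T‖ * ‖u‖ * ‖v‖) := by
    have := Complex.abs_re_le_norm (T * (starRingEnd ℂ) u * v)
    rw [norm_mul, norm_mul, Complex.norm_conj] at this
    cases' abs_le.mp this with h _
    linarith
  have hTs : ‖T‖ ≤ Real.sqrt P * Real.sqrt R := by
    have : ‖T‖ ≤ Real.sqrt (P * R) :=
      (Real.le_sqrt (norm_nonneg T) (mul_nonneg hP hR)).mpr hT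
    rwa [Real.sqrt_mul hP] at this
  have hsP : Real.sqrt P ^ 2 = P := Real.sq_sqrt hP
  have hsR : Real.sqrt R ^ 2 = R := Real.sq_sqrt hR
  have hnu : Complex.normSq u = ‖u‖ ^ 2 := (Complex.sq_norm u).symm
  have hnv : Complex.normSq v = ‖v‖ ^ 2 := (Complex.sq_norm v).symm
  rw [hnu, hnv]
  nlinarith [sq_nonneg (Real.sqrt P * ‖u‖ - Real.sqrt R * ‖v‖),
    norm_nonneg u, norm_nonneg v,
    mul_nonneg (norm_nonneg u) (norm_nonneg v)]

lemma Ppos (l₁ l₂ : ℝ) (a ζ : ℂ) (h1 : 0 ≤ l₁) (h2 : 0 ≤ l₂)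
    (ha : ‖a‖ ≤ Real.sqrt (l₁ * l₂)) :
    0 ≤ l₁ + 2 * (a * ζ).re + l₂ * ‖ζ‖ ^ 2 := by
  have hre : (a * ζ).re ≥ -(‖a‖ * ‖ζ‖) := by
    have := Complex.abs_re_le_norm (a * ζ)
    rw [norm_mul] at this
    cases' abs_le.mp this with h _
    linarith
  rw [Real.sqrt_mul h1] at ha
  have hsP : Real.sqrt l₁ ^ 2 = l₁ := Real.sq_sqrt h1
  have hsR : Real.sqrt l₂ ^ 2 = l₂ := Real.sq_sqrt h2
  nlinarith [sq_nonneg (Real.sqrt l₁ - Real.sqrt l₂ * ‖ζ‖), norm_nonneg a,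
    norm_nonneg ζ, mul_nonneg (norm_nonneg a) (norm_nonneg ζ)]

lemma sq_le_of_le_sqrt' (x L : ℝ) (hx : 0 ≤ x) (hL : 0 ≤ L) (h : x ≤ Real.sqrt L) :
    x ^ 2 ≤ L := by
  nlinarith [Real.sq_sqrt hL, Real.sqrt_nonneg L]

lemma E_param (l₁ l₂ l₃ l₄ : ℝ) (a b c d α β : ℂ) (u v ζ : ℂ) :
    Ereal l₁ l₂ l₃ l₄ a b c d α β ![u, u*ζ, -v, v*ζ]
      = (l₁ + 2*(a*ζ).re + l₂ * ‖ζ‖^2) * Complex.normSq u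
      + (l₃ + 2*(d*ζ).re + l₄ * ‖ζ‖^2) * Complex.normSq v
      + 2 * ((-(b - α*ζ + β*(starRingEnd ℂ) ζ + c*((‖ζ‖:ℂ))^2)) * (starRingEnd ℂ) u * v).re := by
  have hc : ((‖ζ‖ : ℂ))^2 = ζ * (starRingEnd ℂ) ζ := by
    rw [Complex.mul_conj]
    norm_cast
    exact Complex.sq_norm ζ
  rw [hc]
  simp only [Ereal, Matrix.cons_val_zero, Matrix.cons_val_one, Matrix.head_cons,
    Matrix.cons_val_two, Matrix.tail_cons, Matrix.cons_val_three, Complex.sq_norm]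
  simp only [Complex.normSq_apply, Complex.mul_re, Complex.mul_im, Complex.conj_re,
    Complex.conj_im, Complex.neg_re, Complex.neg_im, Complex.sub_re, Complex.sub_im,
    Complex.add_re, Complex.add_im, map_mul, map_sub, map_add]
  ring

theorem stmt_3 (l₁ l₂ l₃ l₄ : ℝ) (a b c d α β : ℂ)
    (A : Matrix (Fin 4) (Fin 4) ℂ)
    (hA : A = !![(l₁ : ℂ), a, b, α;
                 (starRingEnd ℂ) a, (l₂ : ℂ), β, -c;
                 (starRingEnd ℂ) b, (starRingEnd ℂ) β, (l₃ : ℂ), -d;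
                 (starRingEnd ℂ) α, -(starRingEnd ℂ) c, -(starRingEnd ℂ) d, (l₄ : ℂ)]) :
    (∀ z : Fin 4 → ℂ, z 0 * z 3 + z 1 * z 2 = 0 →
        0 ≤ ∑ j, ∑ k, (starRingEnd ℂ) (z j) * A j k * z k) ↔
      ((0 ≤ l₁ ∧ 0 ≤ l₂ ∧ 0 ≤ l₃ ∧ 0 ≤ l₄) ∧
       (‖a‖ ≤ Real.sqrt (l₁ * l₂) ∧
        ‖b‖ ≤ Real.sqrt (l₁ * l₃) ∧
        ‖c‖ ≤ Real.sqrt (l₂ * l₄) ∧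
        ‖d‖ ≤ Real.sqrt (l₃ * l₄)) ∧
       (∀ ζ : ℂ,
          ‖b - α * ζ + β * (starRingEnd ℂ) ζ + c * ((‖ζ‖ : ℂ)) ^ 2‖ ^ 2 ≤
            (l₁ + 2 * (a * ζ).re + l₂ * ‖ζ‖ ^ 2) *
              (l₃ + 2 * (d * ζ).re + l₄ * ‖ζ‖ ^ 2))) := by
  subst hA
  constructor
  · intro h
    have hE : ∀ z : Fin 4 → ℂ, z 0 * z 3 + z 1 * z 2 = 0 →
        0 ≤ Ereal l₁ l₂ l₃ l₄ a b c d α β z := by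
      intro z hq
      have := h z hq
      rw [sum_eq] at this
      exact Complex.zero_le_real.mp this
    have hl1 : 0 ≤ l₁ := by
      have := hE ![1, 0, 0, 0] (by simp)
      simpa [Ereal] using this
    have hl2 : 0 ≤ l₂ := by
      have := hE ![0, 1, 0, 0] (by simp)
      simpa [Ereal] using this
    have hl3 : 0 ≤ l₃ := by
      have := hE ![0, 0, 1, 0] (by simp)
      simpa [Ereal] using this
    have hl4 : 0 ≤ l₄ := by
      have := hE ![0, 0, 0, 1] (by simp)
      simpa [Ereal] using this
    have hka : ‖a‖ ^ 2 ≤ l₁ * l₂ := by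
      apply key2
      intro u v
      have := hE ![u, v, 0, 0] (by simp)
      have heq : Ereal l₁ l₂ l₃ l₄ a b c d α β ![u, v, 0, 0]
          = l₁ * Complex.normSq u + l₂ * Complex.normSq v
            + 2 * (a * (starRingEnd ℂ) u * v).re := by
        simp [Ereal]
      rwa [heq] at this
    have hkb : ‖b‖ ^ 2 ≤ l₁ * l₃ := by
      apply key2
      intro u v
      have := hE ![u, 0, v, 0] (by simp)
      have heq : Ereal l₁ l₂ l₃ l₄ a b c d α β ![u, 0, v, 0]
          = l₁ * Complex.normSq u + l₃ * Complex.normSq v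
            + 2 * (b * (starRingEnd ℂ) u * v).re := by
        simp [Ereal]
      rwa [heq] at this
    have hkc : ‖-c‖ ^ 2 ≤ l₂ * l₄ := by
      apply key2
      intro u v
      have := hE ![0, u, 0, v] (by simp)
      have heq : Ereal l₁ l₂ l₃ l₄ a b c d α β ![0, u, 0, v]
          = l₂ * Complex.normSq u + l₄ * Complex.normSq v
            + 2 * ((-c) * (starRingEnd ℂ) u * v).re := by
        simp [Ereal, neg_mul, Complex.neg_re]
        ring
      rwa [heq] at this
    have hkd : ‖-d‖ ^ 2 ≤ l₃ * l₄ := by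
      apply key2
      intro u v
      have := hE ![0, 0, u, v] (by simp)
      have heq : Ereal l₁ l₂ l₃ l₄ a b c d α β ![0, 0, u, v]
          = l₃ * Complex.normSq u + l₄ * Complex.normSq v
            + 2 * ((-d) * (starRingEnd ℂ) u * v).re := by
        simp [Ereal, neg_mul, Complex.neg_re]
        ring
      rwa [heq] at this
    rw [norm_neg] at hkc hkd
    refine ⟨⟨hl1, hl2, hl3, hl4⟩,
      ⟨(Real.le_sqrt (norm_nonneg a) (mul_nonneg hl1 hl2)).mpr hka,
       (Real.le_sqrt (norm_nonneg b) (mul_nonneg hl1 hl3)).mpr hkb,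
       (Real.le_sqrt (norm_nonneg c) (mul_nonneg hl2 hl4)).mpr hkc,
       (Real.le_sqrt (norm_nonneg d) (mul_nonneg hl3 hl4)).mpr hkd⟩, ?_⟩
    intro ζ
    have hk := key2 (l₁ + 2 * (a * ζ).re + l₂ * ‖ζ‖ ^ 2)
      (l₃ + 2 * (d * ζ).re + l₄ * ‖ζ‖ ^ 2)
      (-(b - α * ζ + β * (starRingEnd ℂ) ζ + c * ((‖ζ‖ : ℂ)) ^ 2)) ?_
    · rwa [norm_neg] at hk
    · intro u v
      have hq : (![u, u*ζ, -v, v*ζ] : Fin 4 → ℂ) 0 * (![u, u*ζ, -v, v*ζ] : Fin 4 → ℂ) 3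
          + (![u, u*ζ, -v, v*ζ] : Fin 4 → ℂ) 1 * (![u, u*ζ, -v, v*ζ] : Fin 4 → ℂ) 2 = 0 := by
        simp
        ring
      have := hE ![u, u*ζ, -v, v*ζ] hq
      rwa [E_param] at this
  · rintro ⟨⟨h1, h2, h3, h4⟩, ⟨ha, hb, hc', hd⟩, hiii⟩ z hq
    rw [sum_eq, Complex.zero_le_real]
    by_cases hz0 : z 0 = 0
    · have hz12 : z 1 * z 2 = 0 := by
        rw [hz0] at hq
        simpa using hq
      rcases mul_eq_zero.mp hz12 with hz1 | hz2
      · have heq : Ereal l₁ l₂ l₃ l₄ a b c d α β z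
            = l₃ * Complex.normSq (z 2) + l₄ * Complex.normSq (z 3)
              + 2 * ((-d) * (starRingEnd ℂ) (z 2) * (z 3)).re := by
          simp [Ereal, hz0, hz1, neg_mul, Complex.neg_re]
          ring
        rw [heq]
        refine final2 _ _ _ _ _ h3 h4 ?_
        rw [norm_neg]
        exact sq_le_of_le_sqrt' _ _ (norm_nonneg d) (mul_nonneg h3 h4) hd
      · have heq : Ereal l₁ l₂ l₃ l₄ a b c d α β z
            = l₂ * Complex.normSq (z 1) + l₄ * Complex.normSq (z 3)
              + 2 * ((-c) * (starRingEnd ℂ) (z 1) * (z 3)).re := by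
          simp [Ereal, hz0, hz2, neg_mul, Complex.neg_re]
          ring
        rw [heq]
        refine final2 _ _ _ _ _ h2 h4 ?_
        rw [norm_neg]
        exact sq_le_of_le_sqrt' _ _ (norm_nonneg c) (mul_nonneg h2 h4) hc'
    · set ζ : ℂ := z 1 / z 0 with hζ
      have hzeq : z = ![z 0, z 0 * ζ, -(-(z 2)), (-(z 2)) * ζ] := by
        funext i
        fin_cases i
        · simp
        · show z 1 = z 0 * ζ
          rw [hζ]
          field_simp
        · show z 2 = -(-(z 2))
          ring
        · show z 3 = (-(z 2)) * ζ
          rw [hζ]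
          field_simp
          linear_combination hq
      rw [hzeq, E_param]
      exact final2 _ _ _ _ _ (Ppos l₁ l₂ a ζ h1 h2 ha) (Ppos l₃ l₄ d ζ h3 h4 hd)
        (by rw [norm_neg]; exact hiii ζ)
end

section
/- Let A be a 6×6 complex Hermitian matrix such that z* A z ≥ 0 for all z ∈ ℂ⁶ with z₁z₆ + z₂z₅ + z₃z₄ = 0. Then ∑_{j,k=1}^{6} A_{jk} · A_{7-j,7-k} ≥ 0. -/
open Complex BigOperators ComplexOrder

open Matrix in
/-- Antisymmetric double sum vanishes. -/
lemma antisym_sum_zero (M : Matrix (Fin 6) (Fin 6) ℂ) (v : Fin 6 → ℂ)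
    (h : ∀ i k, M k i = -M i k) :
    ∑ i, ∑ k, M i k * v i * v k = 0 := by
  have h2 : (∑ i, ∑ k, M i k * v i * v k) = - ∑ i, ∑ k, M i k * v i * v k := by
    calc ∑ i, ∑ k, M i k * v i * v k
        = ∑ k, ∑ i, M i k * v i * v k := Finset.sum_comm
      _ = ∑ i, ∑ k, M k i * v k * v i := rfl
      _ = ∑ i, ∑ k, -(M i k * v i * v k) := by
          refine Finset.sum_congr rfl fun i _ => Finset.sum_congr rfl fun k _ => ?_
          rw [h i k]; ring
      _ = - ∑ i, ∑ k, M i k * v i * v k := by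
          simp
  linear_combination (h2) / 2

open Matrix in
/-- Frobenius norm squared as trace. -/
lemma trace_mul_conjTranspose_eq (M : Matrix (Fin 6) (Fin 6) ℂ) :
    (M * Mᴴ).trace = ((∑ i, ∑ k, Complex.normSq (M i k) : ℝ) : ℂ) := by
  simp only [Matrix.trace, Matrix.diag, Matrix.mul_apply, Matrix.conjTranspose_apply]
  push_cast
  refine Finset.sum_congr rfl fun i _ => Finset.sum_congr rfl fun k _ => ?_
  rw [Complex.star_def, Complex.mul_conj]

open Matrix in
/-- Trace of `M Mᴴ` is invariant under unitary conjugation. -/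
lemma trace_conj_unitary (V M : Matrix (Fin 6) (Fin 6) ℂ) (hV : Vᴴ * V = 1) :
    ((V * M * Vᴴ) * (V * M * Vᴴ)ᴴ).trace = (M * Mᴴ).trace := by
  have h1 : (V * M * Vᴴ) * (V * M * Vᴴ)ᴴ = V * (M * (Mᴴ * Vᴴ)) := by
    simp only [Matrix.conjTranspose_mul, Matrix.conjTranspose_conjTranspose, Matrix.mul_assoc]
    congr 1
    congr 1
    rw [← Matrix.mul_assoc Vᴴ V, hV, Matrix.one_mul]
  rw [h1, Matrix.trace_mul_comm V, Matrix.mul_assoc, Matrix.mul_assoc, hV, Matrix.mul_one]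

open Matrix in
theorem stmt_5 (A : Matrix (Fin 6) (Fin 6) ℂ) (hA : A.IsHermitian)
    (hpos : ∀ z : Fin 6 → ℂ, z 0 * z 5 + z 1 * z 4 + z 2 * z 3 = 0 →
      0 ≤ ∑ j, ∑ k, (starRingEnd ℂ) (z j) * A j k * z k) :
    0 ≤ ∑ j, ∑ k, A j k * A j.rev k.rev := by
  classical
  have hAapp : ∀ i j, (starRingEnd ℂ) (A j i) = A i j := by
    intro i j; simpa [Complex.star_def] using hA.apply i j
  set B : Matrix (Fin 6) (Fin 6) ℂ := Matrix.of (fun i j => (starRingEnd ℂ) (A i.rev j.rev))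
    with hBdef
  have hBapp : ∀ i j, B i j = (starRingEnd ℂ) (A i.rev j.rev) := fun i j => rfl
  have hBA : ∀ i j, (starRingEnd ℂ) (B i j) = A i.rev j.rev := by
    intro i j
    rw [hBapp, Complex.conj_conj]
  have hBc : ∀ i j, (starRingEnd ℂ) (B j i) = B i j := by
    intro i j
    rw [hBapp, hBapp, Complex.conj_conj]
    exact (hAapp j.rev i.rev).symm
  have hconj2 : (starRingEnd ℂ) ((2:ℂ)⁻¹) = (2:ℂ)⁻¹ := by norm_num [Complex.ext_iff]
  set R : Matrix (Fin 6) (Fin 6) ℂ := (2:ℂ)⁻¹ • (A + B) with hRdef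
  set N : Matrix (Fin 6) (Fin 6) ℂ := (2:ℂ)⁻¹ • (A - B) with hNdef
  have hRapp : ∀ i j, R i j = (2:ℂ)⁻¹ * (A i j + B i j) := fun i j => rfl
  have hNapp : ∀ i j, N i j = (2:ℂ)⁻¹ * (A i j - B i j) := fun i j => rfl
  have hRA : ∀ i j, A i j = R i j + N i j := by intro i j; rw [hRapp, hNapp]; ring
  have hRB : ∀ i j, B i j = R i j - N i j := by intro i j; rw [hRapp, hNapp]; ring
  have hRc : ∀ i j, (starRingEnd ℂ) (R j i) = R i j := by
    intro i j
    rw [hRapp, hRapp, _root_.map_mul, _root_.map_add, hconj2, hAapp i j, hBc i j]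
  have hNc : ∀ i j, (starRingEnd ℂ) (N j i) = N i j := by
    intro i j
    rw [hNapp, hNapp, _root_.map_mul, _root_.map_sub, hconj2, hAapp i j, hBc i j]
  have hR : R.IsHermitian := by
    ext i j
    rw [Matrix.conjTranspose_apply, Complex.star_def, hRc]
  have hN : N.IsHermitian := by
    ext i j
    rw [Matrix.conjTranspose_apply, Complex.star_def, hNc]
  -- spectral data for N
  set μ : Fin 6 → ℝ := hN.eigenvalues with hμdef
  set V : Matrix (Fin 6) (Fin 6) ℂ := (hN.eigenvectorUnitary : Matrix (Fin 6) (Fin 6) ℂ)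
    with hVdef
  have hV1 : Vᴴ * V = 1 := by
    rw [hVdef, ← Matrix.star_eq_conjTranspose]
    exact Unitary.coe_star_mul_self hN.eigenvectorUnitary
  have hV2 : V * Vᴴ = 1 := by
    rw [hVdef, ← Matrix.star_eq_conjTranspose]
    exact Unitary.coe_mul_star_self hN.eigenvectorUnitary
  set D : Matrix (Fin 6) (Fin 6) ℂ := Matrix.diagonal (fun i => (μ i : ℂ)) with hDdef
  have hdiag : Vᴴ * N * V = D := by
    rw [hVdef, hDdef, ← Matrix.star_eq_conjTranspose, hμdef]
    have h := Matrix.IsHermitian.conjStarAlgAut_star_eigenvectorUnitary hN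
    rw [Unitary.conjStarAlgAut_star_apply] at h
    exact h
  have hNV : N * V = V * D := by
    have h := congrArg (fun X => V * X) hdiag
    simp only [← Matrix.mul_assoc] at h
    rw [hV2, Matrix.one_mul] at h
    exact h
  have heig : ∀ j i, ∑ k, N i k * V k j = (μ j : ℂ) * V i j := by
    intro j i
    have h := congrFun (congrFun hNV i) j
    rw [Matrix.mul_apply] at h
    rw [h, hDdef, Matrix.mul_diagonal, mul_comm]
  have hnorm : ∀ j, ∑ i, (starRingEnd ℂ) (V i j) * V i j = 1 := by
    intro j
    have h := congrFun (congrFun hV1 j) j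
    rw [Matrix.mul_apply, Matrix.one_apply_eq] at h
    simpa [Matrix.conjTranspose_apply, Complex.star_def] using h
  set C : Matrix (Fin 6) (Fin 6) ℂ := Vᴴ * R * V with hCdef
  have hC : C.IsHermitian := by
    show Cᴴ = C
    rw [hCdef]
    simp only [Matrix.conjTranspose_mul, Matrix.conjTranspose_conjTranspose, hR.eq,
      Matrix.mul_assoc]
  have hCdiag : ∀ j, C j j = ∑ a, ∑ b, (starRingEnd ℂ) (V a j) * R a b * V b j := by
    intro j
    calc C j j = ∑ b, (∑ a, (starRingEnd ℂ) (V a j) * R a b) * V b j := by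
          rw [hCdef, Matrix.mul_apply]
          refine Finset.sum_congr rfl fun b _ => ?_
          rw [Matrix.mul_apply]
          rfl
      _ = ∑ b, ∑ a, (starRingEnd ℂ) (V a j) * R a b * V b j := by
          refine Finset.sum_congr rfl fun b _ => ?_
          rw [Finset.sum_mul]
      _ = ∑ a, ∑ b, (starRingEnd ℂ) (V a j) * R a b * V b j := Finset.sum_comm
  have hCim : ∀ j, (C j j).im = 0 := by
    intro j
    have h : (starRingEnd ℂ) (C j j) = C j j := by
      have := hC.apply j j
      simpa [Complex.star_def] using this
    exact Complex.conj_eq_iff_im.mp h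
  have e0 : (0 : Fin 6).rev = 5 := by decide
  have e1 : (1 : Fin 6).rev = 4 := by decide
  have e2 : (2 : Fin 6).rev = 3 := by decide
  have e3 : (3 : Fin 6).rev = 2 := by decide
  have e4 : (4 : Fin 6).rev = 1 := by decide
  have e5 : (5 : Fin 6).rev = 0 := by decide
  -- key inequality per eigenvalue
  have hkey : ∀ j, μ j ^ 2 ≤ (C j j).re ^ 2 := by
    intro j
    rcases eq_or_ne (μ j) 0 with h0 | h0
    · rw [h0]
      nlinarith [sq_nonneg ((C j j).re)]
    set v : Fin 6 → ℂ := fun i => V i j with hvdef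
    have hveig : ∀ i, ∑ k, N i k * v k = (μ j : ℂ) * v i := fun i => heig j i
    -- v lies on the quadric
    have hanti : ∀ i k : Fin 6, N k.rev i = -(N i.rev k) := by
      intro i k
      rw [hNapp, hNapp, hBapp, hBapp, Fin.rev_rev, Fin.rev_rev,
        ← hAapp k.rev i, ← hAapp i.rev k]
      ring
    have hsum0 : ∑ i, ∑ k, (Matrix.of fun i k => N i.rev k) i k * v i * v k = 0 :=
      antisym_sum_zero _ v (by intro i k; simpa using hanti i k)
    have hμq : (μ j : ℂ) * (∑ i, v i * v i.rev) = 0 := by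
      have hstep : ∑ i, v i * ((μ j : ℂ) * v i.rev) = 0 := by
        rw [← hsum0]
        refine Finset.sum_congr rfl fun i _ => ?_
        rw [← hveig i.rev, Finset.mul_sum]
        refine Finset.sum_congr rfl fun k _ => ?_
        simp only [Matrix.of_apply]
        ring
      rw [Finset.mul_sum, ← hstep]
      exact Finset.sum_congr rfl fun i _ => by ring
    have hqsum : ∑ i, v i * v i.rev = 2 * (v 0 * v 5 + v 1 * v 4 + v 2 * v 3) := by
      rw [Fin.sum_univ_six, e0, e1, e2, e3, e4, e5]
      ring
    have hq : v 0 * v 5 + v 1 * v 4 + v 2 * v 3 = 0 := by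
      have h2 : ((μ j : ℂ)) ≠ 0 := by exact_mod_cast h0
      have := (mul_eq_zero.mp hμq).resolve_left h2
      rw [hqsum] at this
      have := (mul_eq_zero.mp this).resolve_left (by norm_num)
      exact this
    -- first positivity: at v
    have hRpart : ∑ a, ∑ b, (starRingEnd ℂ) (v a) * R a b * v b = C j j :=
      (hCdiag j).symm
    have hNpart : ∑ a, ∑ b, (starRingEnd ℂ) (v a) * N a b * v b = (μ j : ℂ) := by
      calc ∑ a, ∑ b, (starRingEnd ℂ) (v a) * N a b * v b
          = ∑ a, (starRingEnd ℂ) (v a) * ((μ j : ℂ) * v a) := by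
            refine Finset.sum_congr rfl fun a _ => ?_
            rw [← hveig a, Finset.mul_sum]
            exact Finset.sum_congr rfl fun b _ => by ring
        _ = (μ j : ℂ) * ∑ a, (starRingEnd ℂ) (v a) * v a := by
            rw [Finset.mul_sum]
            exact Finset.sum_congr rfl fun a _ => by ring
        _ = (μ j : ℂ) := by rw [hnorm j, mul_one]
    have hv1 := hpos v hq
    have hsplit : (∑ a, ∑ b, (starRingEnd ℂ) (v a) * A a b * v b) = C j j + (μ j : ℂ) := by
      rw [← hRpart, ← hNpart, ← Finset.sum_add_distrib]
      refine Finset.sum_congr rfl fun a _ => ?_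
      rw [← Finset.sum_add_distrib]
      refine Finset.sum_congr rfl fun b _ => ?_
      rw [hRA a b]
      ring
    rw [hsplit] at hv1
    -- second positivity: at w = conj ∘ rev of v
    set w : Fin 6 → ℂ := fun i => (starRingEnd ℂ) (v i.rev) with hwdef
    have hqw : w 0 * w 5 + w 1 * w 4 + w 2 * w 3 = 0 := by
      simp only [hwdef, e0, e1, e2, e3, e4, e5]
      rw [← _root_.map_mul, ← _root_.map_mul, ← _root_.map_mul, ← _root_.map_add,
        ← _root_.map_add,
        show v 5 * v 0 + v 4 * v 1 + v 3 * v 2 = v 0 * v 5 + v 1 * v 4 + v 2 * v 3 from by ring,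
        hq, _root_.map_zero]
    have hv2 := hpos w hqw
    have hconjS : (∑ a, ∑ b, (starRingEnd ℂ) (w a) * A a b * w b)
        = (starRingEnd ℂ) (∑ a, ∑ b, (starRingEnd ℂ) (v a) * B a b * v b) := by
      rw [map_sum]
      refine Fintype.sum_equiv Fin.revPerm _ _ (fun a => ?_)
      rw [map_sum]
      refine Fintype.sum_equiv Fin.revPerm _ _ (fun b => ?_)
      simp only [Fin.revPerm_apply]
      rw [_root_.map_mul, _root_.map_mul, Complex.conj_conj, hBA]
      simp only [hwdef, Fin.rev_rev, Complex.conj_conj]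
    have hBsplit : (∑ a, ∑ b, (starRingEnd ℂ) (v a) * B a b * v b) = C j j - (μ j : ℂ) := by
      rw [← hRpart, ← hNpart, ← Finset.sum_sub_distrib]
      refine Finset.sum_congr rfl fun a _ => ?_
      rw [← Finset.sum_sub_distrib]
      refine Finset.sum_congr rfl fun b _ => ?_
      rw [hRB a b]
      ring
    rw [hconjS, hBsplit] at hv2
    have h1 := (Complex.le_def.mp hv1).1
    have h2 := (Complex.le_def.mp hv2).1
    simp only [Complex.zero_re, Complex.add_re, Complex.sub_re, Complex.ofReal_re,
      Complex.conj_re] at h1 h2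
    have habs : |μ j| ≤ (C j j).re := abs_le.mpr ⟨by linarith, by linarith⟩
    calc μ j ^ 2 = |μ j| ^ 2 := (_root_.sq_abs _).symm
      _ ≤ (C j j).re ^ 2 := pow_le_pow_left₀ (abs_nonneg _) habs 2
  -- Frobenius computations
  have hNdecomp : N = V * D * Vᴴ := by
    calc N = N * (V * Vᴴ) := by rw [hV2, Matrix.mul_one]
      _ = (N * V) * Vᴴ := by rw [Matrix.mul_assoc]
      _ = V * D * Vᴴ := by rw [hNV]
  have hNfro : (∑ a, ∑ b, Complex.normSq (N a b)) = ∑ i, μ i ^ 2 := by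
    have htr : (N * Nᴴ).trace = (D * Dᴴ).trace := by
      conv_lhs => rw [hNdecomp]
      exact trace_conj_unitary V D hV1
    have hDtr : (D * Dᴴ).trace = ((∑ i, μ i ^ 2 : ℝ) : ℂ) := by
      rw [hDdef, Matrix.diagonal_conjTranspose, Matrix.diagonal_mul_diagonal,
        Matrix.trace_diagonal]
      push_cast
      refine Finset.sum_congr rfl fun i _ => ?_
      simp only [Pi.star_apply, Complex.star_def, Complex.conj_ofReal]
      ring
    have := (trace_mul_conjTranspose_eq N).symm.trans (htr.trans hDtr)
    exact_mod_cast this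
  have hCfro : (∑ a, ∑ b, Complex.normSq (C a b)) = ∑ a, ∑ b, Complex.normSq (R a b) := by
    have hCd : C = Vᴴ * R * (Vᴴ)ᴴ := by
      rw [hCdef, Matrix.conjTranspose_conjTranspose]
    have htr : (C * Cᴴ).trace = (R * Rᴴ).trace := by
      conv_lhs => rw [hCd]
      refine trace_conj_unitary Vᴴ R ?_
      rw [Matrix.conjTranspose_conjTranspose]
      exact hV2
    have := (trace_mul_conjTranspose_eq C).symm.trans
      (htr.trans (trace_mul_conjTranspose_eq R))
    exact_mod_cast this
  -- the target sum in terms of R and N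
  have hcross : (∑ a, ∑ b, N a b * (starRingEnd ℂ) (R a b))
      = ∑ a, ∑ b, R a b * (starRingEnd ℂ) (N a b) := by
    calc ∑ a, ∑ b, N a b * (starRingEnd ℂ) (R a b)
        = ∑ a, ∑ b, N a b * R b a := by
          exact Finset.sum_congr rfl fun a _ => Finset.sum_congr rfl fun b _ => by
            rw [hRc b a]
      _ = ∑ b, ∑ a, N a b * R b a := Finset.sum_comm
      _ = ∑ a, ∑ b, R a b * (starRingEnd ℂ) (N a b) := by
          exact Finset.sum_congr rfl fun a _ => Finset.sum_congr rfl fun b _ => by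
            rw [hNc b a]
            ring
  have hTerm : ∀ a b : Fin 6, A a b * A a.rev b.rev
      = (((Complex.normSq (R a b) : ℝ) : ℂ) - ((Complex.normSq (N a b) : ℝ) : ℂ))
        + (N a b * (starRingEnd ℂ) (R a b) - R a b * (starRingEnd ℂ) (N a b)) := by
    intro a b
    rw [← hBA a b, hRA a b, hRB a b, _root_.map_sub]
    have h1 := Complex.mul_conj (R a b)
    have h2 := Complex.mul_conj (N a b)
    push_cast at h1 h2 ⊢
    linear_combination h1 - h2
  have hTargetC : (∑ j, ∑ k, A j k * A j.rev k.rev)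
      = (((∑ a, ∑ b, Complex.normSq (R a b)) - (∑ a, ∑ b, Complex.normSq (N a b)) : ℝ) : ℂ) := by
    calc ∑ j, ∑ k, A j k * A j.rev k.rev
        = ∑ a, ∑ b, ((((Complex.normSq (R a b) : ℝ) : ℂ) - ((Complex.normSq (N a b) : ℝ) : ℂ))
            + (N a b * (starRingEnd ℂ) (R a b) - R a b * (starRingEnd ℂ) (N a b))) :=
          Finset.sum_congr rfl fun a _ => Finset.sum_congr rfl fun b _ => hTerm a b
      _ = _ := by
          simp only [Finset.sum_add_distrib, Finset.sum_sub_distrib]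
          rw [hcross]
          push_cast
          ring
  -- final assembly
  have hmain : (∑ a, ∑ b, Complex.normSq (N a b)) ≤ ∑ a, ∑ b, Complex.normSq (R a b) := by
    rw [hNfro, ← hCfro]
    calc ∑ i, μ i ^ 2 ≤ ∑ j, Complex.normSq (C j j) := by
          refine Finset.sum_le_sum fun j _ => ?_
          rw [Complex.normSq_apply, hCim j]
          have := hkey j
          nlinarith
      _ ≤ ∑ a, ∑ b, Complex.normSq (C a b) := by
          refine Finset.sum_le_sum fun j _ => ?_
          exact Finset.single_le_sum (fun b _ => Complex.normSq_nonneg _) (Finset.mem_univ j)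
  rw [hTargetC]
  rw [Complex.zero_le_real]
  linarith
end

section
/- Let a ∈ ℂ with |a| ≤ 2 and let A be the 6×6 Hermitian matrix equal to the identity except A₁₆ = a and A₆₁ = ā. Then z* A z ≥ 0 for all z ∈ ℂ⁶ with z₁z₆ + z₂z₅ + z₃z₄ = 0. -/
set_option maxHeartbeats 1000000

open Complex BigOperators ComplexOrder

theorem stmt_6 (a : ℂ) (ha : ‖a‖ ≤ 2)
    (A : Matrix (Fin 6) (Fin 6) ℂ)
    (hA : A = 1 + a • Matrix.single 0 5 (1 : ℂ)
              + (starRingEnd ℂ) a • Matrix.single 5 0 (1 : ℂ)) :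
    ∀ z : Fin 6 → ℂ, z 0 * z 5 + z 1 * z 4 + z 2 * z 3 = 0 →
      0 ≤ ∑ j, ∑ k, (starRingEnd ℂ) (z j) * A j k * z k := by
  intro z hz
  have key : ∑ j, ∑ k, (starRingEnd ℂ) (z j) * A j k * z k
      = ((Complex.normSq (z 0) + Complex.normSq (z 1) + Complex.normSq (z 2)
        + Complex.normSq (z 3) + Complex.normSq (z 4) + Complex.normSq (z 5)
        + 2 * (a * (starRingEnd ℂ) (z 0) * z 5).re : ℝ) : ℂ) := by
    subst hA
    simp only [Fin.sum_univ_six, Matrix.add_apply, Matrix.smul_apply, Matrix.one_apply,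
      Matrix.single, Matrix.of_apply, smul_eq_mul, mul_one]
    simp (config := { decide := true }) only [if_true, if_false]
    norm_num
    apply Complex.ext <;>
      simp [Complex.normSq_apply, Complex.mul_re, Complex.mul_im,
        Complex.conj_re, Complex.conj_im] <;> ring
  rw [key, Complex.zero_le_real]
  have r0 := norm_nonneg (z 0)
  have r1 := norm_nonneg (z 1)
  have r2 := norm_nonneg (z 2)
  have r3 := norm_nonneg (z 3)
  have r4 := norm_nonneg (z 4)
  have r5 := norm_nonneg (z 5)
  have h05 : ‖z 0‖ * ‖z 5‖
      ≤ ‖z 1‖ * ‖z 4‖ + ‖z 2‖ * ‖z 3‖ := by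
    have h : z 0 * z 5 = -(z 1 * z 4 + z 2 * z 3) := by linear_combination hz
    calc ‖z 0‖ * ‖z 5‖ = ‖z 0 * z 5‖ := (norm_mul _ _).symm
      _ = ‖z 1 * z 4 + z 2 * z 3‖ := by rw [h, norm_neg]
      _ ≤ ‖z 1 * z 4‖ + ‖z 2 * z 3‖ := norm_add_le _ _
      _ = _ := by rw [norm_mul, norm_mul]
  have hwre : -(‖a‖ * ‖z 0‖ * ‖z 5‖)
      ≤ (a * (starRingEnd ℂ) (z 0) * z 5).re := by
    have h1 : ‖a * (starRingEnd ℂ) (z 0) * z 5‖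
        = ‖a‖ * ‖z 0‖ * ‖z 5‖ := by
      rw [norm_mul, norm_mul, Complex.norm_conj]
    calc -(‖a‖ * ‖z 0‖ * ‖z 5‖)
        = -(‖a * (starRingEnd ℂ) (z 0) * z 5‖) := by rw [h1]
      _ ≤ -|(a * (starRingEnd ℂ) (z 0) * z 5).re| :=
          neg_le_neg (Complex.abs_re_le_norm _)
      _ ≤ _ := neg_abs_le _
  have hsq : ∀ u : ℂ, Complex.normSq u = ‖u‖ ^ 2 := fun u => (Complex.sq_norm u).symm
  rw [hsq, hsq, hsq, hsq, hsq, hsq]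
  nlinarith [sq_nonneg (‖z 0‖ - ‖z 5‖),
    sq_nonneg (‖z 1‖ - ‖z 4‖),
    sq_nonneg (‖z 2‖ - ‖z 3‖),
    mul_nonneg r0 r5, mul_nonneg (mul_nonneg r0 r5) (sub_nonneg.mpr ha), hwre, h05, ha]
end

section
/- Let a ∈ ℂ with |a| > 2 and let A = I₆ + a·E₁₆ + ā·E₆₁. Then there exists z ∈ ℂ⁶ with z₁z₆ + z₂z₅ + z₃z₄ = 0 and z* A z < 0. -/
open Complex BigOperators ComplexOrder

theorem stmt_7 (a : ℂ) (ha : 2 < ‖a‖)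
    (A : Matrix (Fin 6) (Fin 6) ℂ)
    (hA : A = 1 + a • Matrix.single 0 5 (1 : ℂ)
              + (starRingEnd ℂ) a • Matrix.single 5 0 (1 : ℂ)) :
    ∃ z : Fin 6 → ℂ, z 0 * z 5 + z 1 * z 4 + z 2 * z 3 = 0 ∧
      ∑ j, ∑ k, (starRingEnd ℂ) (z j) * A j k * z k < 0 := by
  set r := ‖a‖ with hr
  have hrpos : 0 < r := by linarith
  set u : ℂ := (starRingEnd ℂ) a * (((r - 1) / r : ℝ) : ℂ) with hu
  obtain ⟨w, hw⟩ := IsAlgClosed.exists_pow_nat_eq u (n := 2) (by norm_num)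
  have hnsq : (starRingEnd ℂ) a * a = ((r ^ 2 : ℝ) : ℂ) := by
    rw [mul_comm, Complex.mul_conj, Complex.normSq_eq_norm_sq]
  have hnu : Complex.normSq u = (r - 1) ^ 2 := by
    rw [hu, Complex.normSq_mul, Complex.normSq_conj, Complex.normSq_ofReal,
      Complex.normSq_eq_norm_sq, ← hr]
    field_simp
  have hnw : Complex.normSq w = r - 1 := by
    have h1 : Complex.normSq w ^ 2 = (r - 1) ^ 2 := by
      rw [← hnu, ← hw, map_pow]
    nlinarith [Complex.normSq_nonneg w]
  have hww : (starRingEnd ℂ) w * w = ((r - 1 : ℝ) : ℂ) := by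
    rw [mul_comm, Complex.mul_conj, hnw]
  have huu : (starRingEnd ℂ) u * u = (((r - 1) ^ 2 : ℝ) : ℂ) := by
    rw [mul_comm, Complex.mul_conj, hnu]
  have hau : a * u = ((r * (r - 1) : ℝ) : ℂ) := by
    rw [hu, ← mul_assoc, mul_comm a, hnsq]
    push_cast
    field_simp
  have hacu : (starRingEnd ℂ) a * (starRingEnd ℂ) u = ((r * (r - 1) : ℝ) : ℂ) := by
    rw [← map_mul, hau]
    simp [Complex.conj_ofReal]
  set z : Fin 6 → ℂ := ![1, w, 0, 0, w, -u] with hz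
  have e0 : z 0 = 1 := rfl
  have e1 : z 1 = w := rfl
  have e2 : z 2 = 0 := rfl
  have e3 : z 3 = 0 := rfl
  have e4 : z 4 = w := rfl
  have e5 : z 5 = -u := rfl
  refine ⟨z, ?_, ?_⟩
  · rw [e0, e1, e2, e3, e4, e5, show w * w = u by rw [← hw]; ring]
    ring
  · have hent : ∀ j k : Fin 6, A j k =
        (if j = k then 1 else 0) + (if j = 0 ∧ k = 5 then a else 0)
        + (if j = 5 ∧ k = 0 then (starRingEnd ℂ) a else 0) := by
      intro j k
      subst hA
      fin_cases j <;> fin_cases k <;>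
        simp [Matrix.one_apply, Matrix.single]
    simp only [Fin.sum_univ_six, hent, e0, e1, e2, e3, e4, e5]
    norm_num [Fin.ext_iff, Fin.isValue, show ((4:Fin 6):ℕ) = 4 from rfl, show ((5:Fin 6):ℕ) = 5 from rfl]
    rw [hau, hww, huu, mul_comm ((starRingEnd ℂ) u), hacu]
    have hcalc : (1:ℂ) + -((r * (r - 1) : ℝ) : ℂ) + ((r - 1 : ℝ) : ℂ) + ((r - 1 : ℝ) : ℂ) +
        (-((r * (r - 1) : ℝ) : ℂ) + (((r - 1) ^ 2 : ℝ) : ℂ)) = ((1 - (r - 1) ^ 2 : ℝ) : ℂ) := by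
      push_cast
      ring
    rw [hcalc]
    have hneg : (1 - (r - 1) ^ 2 : ℝ) < 0 := by nlinarith
    exact_mod_cast hneg
end

section
/- For real λ > μ > 0, set a = λ + μ, and let A be the 20×20 real diagonal matrix with A₁₁ = A₂₀,₂₀ = λ, A_kk = μ for k ∈ {2,5,10,11,16,19}, all other diagonal entries 0, modified by setting A₁,₂₀ = A₂₀,₁ = a. Then z* A z ≥ 0 for all z ∈ ℂ²⁰ satisfying z₁z₂₀ − z₁₀z₁₁ + z₅z₁₆ − z₂z₁₉ = 0, yet λ² + 3μ² − a² < 0. -/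
open Complex BigOperators ComplexOrder

theorem stmt_8 (l m : ℝ) (hm : 0 < m) (hlm : m < l) (a : ℝ) (ha : a = l + m)
    (A : Matrix (Fin 20) (Fin 20) ℂ)
    (hA : A = fun j k =>
      if j = k then
        (if j = 0 ∨ j = 19 then (l : ℂ)
         else if j = 1 ∨ j = 4 ∨ j = 9 ∨ j = 10 ∨ j = 15 ∨ j = 18 then (m : ℂ) else 0)
      else if (j = 0 ∧ k = 19) ∨ (j = 19 ∧ k = 0) then (a : ℂ) else 0) :
    (∀ z : Fin 20 → ℂ, z 0 * z 19 - z 9 * z 10 + z 4 * z 15 - z 1 * z 18 = 0 →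
        0 ≤ ∑ j, ∑ k, (starRingEnd ℂ) (z j) * A j k * z k) ∧
      l ^ 2 + 3 * m ^ 2 - a ^ 2 < 0 := by
  constructor
  · intro z hz
    have hsum : ∑ j, ∑ k, (starRingEnd ℂ) (z j) * A j k * z k =
        (l:ℂ) * ((starRingEnd ℂ) (z 0) * z 0) + (l:ℂ) * ((starRingEnd ℂ) (z 19) * z 19)
        + (m:ℂ) * ((starRingEnd ℂ) (z 1) * z 1) + (m:ℂ) * ((starRingEnd ℂ) (z 4) * z 4)
        + (m:ℂ) * ((starRingEnd ℂ) (z 9) * z 9) + (m:ℂ) * ((starRingEnd ℂ) (z 10) * z 10)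
        + (m:ℂ) * ((starRingEnd ℂ) (z 15) * z 15) + (m:ℂ) * ((starRingEnd ℂ) (z 18) * z 18)
        + (a:ℂ) * ((starRingEnd ℂ) (z 0) * z 19) + (a:ℂ) * ((starRingEnd ℂ) (z 19) * z 0) := by
      subst hA
      simp only [Fin.sum_univ_succ, Fin.sum_univ_zero]
      simp (config := { decide := true })
      have e4 : z (Fin.succ 2).succ = z 4 := rfl
      have e9 : z (Fin.succ 2).succ.succ.succ.succ.succ.succ = z 9 := rfl
      have e10 : z (Fin.succ 2).succ.succ.succ.succ.succ.succ.succ = z 10 := rfl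
      have e15 : z (Fin.succ 2).succ.succ.succ.succ.succ.succ.succ.succ.succ.succ.succ.succ = z 15 := rfl
      have e18 : z (Fin.succ 2).succ.succ.succ.succ.succ.succ.succ.succ.succ.succ.succ.succ.succ.succ.succ = z 18 := rfl
      have e19 : z (Fin.succ 2).succ.succ.succ.succ.succ.succ.succ.succ.succ.succ.succ.succ.succ.succ.succ.succ = z 19 := rfl
      ring
    set w : ℂ := (starRingEnd ℂ) (z 0) * z 19 with hw
    have h1 : (starRingEnd ℂ) w = (starRingEnd ℂ) (z 19) * z 0 := by
      simp [hw, mul_comm]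
    have h2 : w + (starRingEnd ℂ) w = ((2 * w.re : ℝ) : ℂ) := Complex.add_conj w
    push_cast at h2
    have hcross : (a:ℂ) * w + (a:ℂ) * ((starRingEnd ℂ) (z 19) * z 0)
        = ((a * (2 * w.re) : ℝ) : ℂ) := by
      rw [← h1]
      push_cast
      linear_combination (a : ℂ) * h2
    have hreal : ∑ j, ∑ k, (starRingEnd ℂ) (z j) * A j k * z k =
        ((l * Complex.normSq (z 0) + l * Complex.normSq (z 19)
          + m * Complex.normSq (z 1) + m * Complex.normSq (z 4)
          + m * Complex.normSq (z 9) + m * Complex.normSq (z 10)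
          + m * Complex.normSq (z 15) + m * Complex.normSq (z 18)
          + a * (2 * w.re) : ℝ) : ℂ) := by
      have hn : ∀ u : ℂ, (starRingEnd ℂ) u * u = ((Complex.normSq u : ℝ) : ℂ) :=
        fun u => by rw [mul_comm, Complex.mul_conj]
      rw [hsum]
      push_cast
      push_cast at hcross
      linear_combination (l:ℂ) * hn (z 0) + (l:ℂ) * hn (z 19) + (m:ℂ) * hn (z 1)
        + (m:ℂ) * hn (z 4) + (m:ℂ) * hn (z 9) + (m:ℂ) * hn (z 10)
        + (m:ℂ) * hn (z 15) + (m:ℂ) * hn (z 18) + hcross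
    rw [hreal, Complex.zero_le_real]
    -- now a real inequality
    set b0 := ‖z 0‖
    set b1 := ‖z 1‖
    set b4 := ‖z 4‖
    set b9 := ‖z 9‖
    set b10 := ‖z 10‖
    set b15 := ‖z 15‖
    set b18 := ‖z 18‖
    set b19 := ‖z 19‖
    have habsw : ‖w‖ = b0 * b19 := by
      rw [hw, norm_mul, Complex.norm_conj]
    have hre : -(b0 * b19) ≤ w.re := by
      rw [← habsw]
      exact (abs_le.1 (Complex.abs_re_le_norm w)).1
    have hconstraint : z 0 * z 19 = z 9 * z 10 - z 4 * z 15 + z 1 * z 18 := by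
      linear_combination hz
    have htri : b0 * b19 ≤ b9 * b10 + b4 * b15 + b1 * b18 := by
      have : ‖z 0 * z 19‖ ≤ b9 * b10 + b4 * b15 + b1 * b18 := by
        rw [hconstraint]
        calc ‖z 9 * z 10 - z 4 * z 15 + z 1 * z 18‖
            ≤ ‖z 9 * z 10 - z 4 * z 15‖ + ‖z 1 * z 18‖ :=
              norm_add_le _ _
          _ ≤ ‖z 9 * z 10‖ + ‖z 4 * z 15‖ + ‖z 1 * z 18‖ := by
              have := norm_sub_le (z 9 * z 10) (z 4 * z 15)
              linarith
          _ = b9 * b10 + b4 * b15 + b1 * b18 := by simp [norm_mul, b9, b10, b4, b15, b1, b18]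
      rwa [norm_mul] at this
    have hnsq : ∀ u : ℂ, Complex.normSq u = ‖u‖ ^ 2 :=
      fun u => (Complex.sq_norm u).symm
    rw [hnsq, hnsq, hnsq, hnsq, hnsq, hnsq, hnsq, hnsq]
    subst ha
    nlinarith [sq_nonneg (b0 - b19), sq_nonneg (b1 - b18), sq_nonneg (b4 - b15),
      sq_nonneg (b9 - b10), hm.le, hlm.le, hre, htri,
      mul_le_mul_of_nonneg_left htri hm.le,
      mul_le_mul_of_nonneg_left hre (by linarith : (0:ℝ) ≤ l + m)]
  · subst ha
    nlinarith [mul_pos hm (sub_pos.2 hlm)]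
end

section
/- For any z ∈ ℂ⁶ with z₁z₆ + z₂z₅ + z₃z₄ = 0 and any a ∈ ℂ, one has |z|² + 2Re(a·z̄₁z₆) ≥ 2(2 − |a|)|z₁z₆|. -/
open Complex BigOperators

theorem stmt_9 (z : Fin 6 → ℂ) (hz : z 0 * z 5 + z 1 * z 4 + z 2 * z 3 = 0) (a : ℂ) :
    2 * (2 - ‖a‖) * ‖z 0 * z 5‖ ≤
      ∑ j, ‖z j‖ ^ 2 + 2 * (a * (starRingEnd ℂ) (z 0) * z 5).re := by
  have h1 : ‖z 0 * z 5‖ ≤ ‖z 1 * z 4‖ + ‖z 2 * z 3‖ := by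
    have h : z 0 * z 5 = -(z 1 * z 4) + -(z 2 * z 3) := by linear_combination hz
    calc ‖z 0 * z 5‖ = ‖-(z 1 * z 4) + -(z 2 * z 3)‖ := by rw [h]
    _ ≤ ‖-(z 1 * z 4)‖ + ‖-(z 2 * z 3)‖ := norm_add_le _ _
    _ = ‖z 1 * z 4‖ + ‖z 2 * z 3‖ := by simp [norm_neg]
  have h2 : -(‖a‖ * ‖z 0 * z 5‖) ≤ (a * (starRingEnd ℂ) (z 0) * z 5).re := by
    have hb := Complex.abs_re_le_norm (a * (starRingEnd ℂ) (z 0) * z 5)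
    have he : ‖a * (starRingEnd ℂ) (z 0) * z 5‖
        = ‖a‖ * ‖z 0 * z 5‖ := by
      simp [norm_mul, mul_assoc]
    rw [he] at hb
    have := (abs_le.mp hb).1
    linarith
  simp only [Fin.sum_univ_six]
  have e05 : ‖z 0 * z 5‖ = ‖z 0‖ * ‖z 5‖ := norm_mul _ _
  have e14 : ‖z 1 * z 4‖ = ‖z 1‖ * ‖z 4‖ := norm_mul _ _
  have e23 : ‖z 2 * z 3‖ = ‖z 2‖ * ‖z 3‖ := norm_mul _ _
  nlinarith [sq_nonneg (‖z 0‖ - ‖z 5‖),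
    sq_nonneg (‖z 1‖ - ‖z 4‖),
    sq_nonneg (‖z 2‖ - ‖z 3‖), h2, h1]
end

section
/- Let λ₁, λ₂, λ₃, λ₄ ≥ 0 and u, D > 0 be reals. Then for every r > 0: (λ₁ + λ₂r²)(λ₃ + λ₄r²) + 4ur² − 2r[λ₁D + λ₃u/D + r²(λ₂D + λ₄u/D)] ≤ (√(λ₁λ₄) + √(λ₂λ₃) − 2√u)²r² + (√(λ₁λ₃) − √(λ₂λ₄)r²)². -/
theorem stmt_11 (l₁ l₂ l₃ l₄ u D : ℝ) (h₁ : 0 ≤ l₁) (h₂ : 0 ≤ l₂) (h₃ : 0 ≤ l₃)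
    (h₄ : 0 ≤ l₄) (hu : 0 < u) (hD : 0 < D) :
    ∀ r : ℝ, 0 < r →
      (l₁ + l₂ * r ^ 2) * (l₃ + l₄ * r ^ 2) + 4 * u * r ^ 2
          - 2 * r * (l₁ * D + l₃ * u / D + r ^ 2 * (l₂ * D + l₄ * u / D)) ≤
        (Real.sqrt (l₁ * l₄) + Real.sqrt (l₂ * l₃) - 2 * Real.sqrt u) ^ 2 * r ^ 2
          + (Real.sqrt (l₁ * l₃) - Real.sqrt (l₂ * l₄) * r ^ 2) ^ 2 := by
  intro r hr
  rw [Real.sqrt_mul h₁, Real.sqrt_mul h₂, Real.sqrt_mul h₁, Real.sqrt_mul h₂]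
  set a := Real.sqrt l₁ with ha
  set b := Real.sqrt l₂ with hb
  set c := Real.sqrt l₃ with hc
  set d := Real.sqrt l₄ with hd
  set v := Real.sqrt u with hv
  have ea : l₁ = a ^ 2 := (Real.sq_sqrt h₁).symm
  have eb : l₂ = b ^ 2 := (Real.sq_sqrt h₂).symm
  have ec : l₃ = c ^ 2 := (Real.sq_sqrt h₃).symm
  have ed : l₄ = d ^ 2 := (Real.sq_sqrt h₄).symm
  have eu : u = v ^ 2 := (Real.sq_sqrt hu.le).symm
  rw [ea, eb, ec, ed, eu]
  have hX : a ^ 2 * D + c ^ 2 * v ^ 2 / D + r ^ 2 * (b ^ 2 * D + d ^ 2 * v ^ 2 / D)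
      = (a ^ 2 * D ^ 2 + c ^ 2 * v ^ 2 + r ^ 2 * (b ^ 2 * D ^ 2 + d ^ 2 * v ^ 2)) / D := by
    field_simp
  have key : 4 * v * (a * d + b * c) * r ^ 2 ≤
      2 * r * (a ^ 2 * D + c ^ 2 * v ^ 2 / D + r ^ 2 * (b ^ 2 * D + d ^ 2 * v ^ 2 / D)) := by
    rw [hX, ← mul_div_assoc, le_div_iff₀ hD]
    nlinarith [mul_nonneg hr.le (sq_nonneg (a * D - r * d * v)),
      mul_nonneg hr.le (sq_nonneg (c * v - r * b * D))]
  nlinarith [key]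
end

section
/- For any z ∈ ℂ²⁰ satisfying z₁z₂₀ − z₁₀z₁₁ + z₅z₁₆ − z₂z₁₉ = 0 and any reals λ, μ, a with 0 < a ≤ λ + μ: λ(|z₁|² + |z₂₀|²) + μ(|z₂|² + |z₅|² + |z₁₀|² + |z₁₁|² + |z₁₆|² + |z₁₉|²) + 2a·Re(z̄₁z₂₀) ≥ 0. -/
open Complex

theorem stmt_15 (z : Fin 20 → ℂ)
    (hz : z 0 * z 19 - z 9 * z 10 + z 4 * z 15 - z 1 * z 18 = 0)
    (l m a : ℝ) (hl : 0 < l) (hm : 0 < m) (ha : 0 < a) (halm : a ≤ l + m) :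
    0 ≤ l * (‖z 0‖ ^ 2 + ‖z 19‖ ^ 2)
        + m * (‖z 1‖ ^ 2 + ‖z 4‖ ^ 2 + ‖z 9‖ ^ 2
            + ‖z 10‖ ^ 2 + ‖z 15‖ ^ 2 + ‖z 18‖ ^ 2)
        + 2 * a * ((starRingEnd ℂ) (z 0) * z 19).re := by
  have hz' : z 0 * z 19 = z 9 * z 10 - z 4 * z 15 + z 1 * z 18 := by
    linear_combination hz
  -- bound on the real part
  have hre : -(‖z 0‖ * ‖z 19‖) ≤
      ((starRingEnd ℂ) (z 0) * z 19).re := by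
    have h1 : |((starRingEnd ℂ) (z 0) * z 19).re| ≤ ‖(starRingEnd ℂ) (z 0) * z 19‖ :=
      Complex.abs_re_le_norm _
    have h2 : ‖(starRingEnd ℂ) (z 0) * z 19‖
        = ‖z 0‖ * ‖z 19‖ := by
      rw [norm_mul, Complex.norm_conj]
    rw [h2] at h1
    linarith [neg_abs_le (((starRingEnd ℂ) (z 0) * z 19).re)]
  -- triangle inequality bound
  have htri : ‖z 0‖ * ‖z 19‖ ≤
      ‖z 9‖ * ‖z 10‖ + ‖z 4‖ * ‖z 15‖
        + ‖z 1‖ * ‖z 18‖ := by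
    calc ‖z 0‖ * ‖z 19‖ = ‖z 0 * z 19‖ := (norm_mul _ _).symm
      _ = ‖z 9 * z 10 - z 4 * z 15 + z 1 * z 18‖ := by rw [hz']
      _ ≤ ‖z 9 * z 10 - z 4 * z 15‖ + ‖z 1 * z 18‖ := norm_add_le _ _
      _ ≤ ‖z 9 * z 10‖ + ‖z 4 * z 15‖ + ‖z 1 * z 18‖ := by
          gcongr; exact norm_sub_le _ _
      _ = ‖z 9‖ * ‖z 10‖ + ‖z 4‖ * ‖z 15‖
            + ‖z 1‖ * ‖z 18‖ := by simp [norm_mul]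
  nlinarith [sq_nonneg (‖z 0‖ - ‖z 19‖),
    sq_nonneg (‖z 9‖ - ‖z 10‖),
    sq_nonneg (‖z 4‖ - ‖z 15‖),
    sq_nonneg (‖z 1‖ - ‖z 18‖),
    norm_nonneg (z 0), norm_nonneg (z 19),
    mul_nonneg (norm_nonneg (z 0)) (norm_nonneg (z 19)),
    mul_le_mul_of_nonneg_left htri (le_of_lt hm),
    mul_le_mul_of_nonneg_left hre (le_of_lt (by linarith : (0:ℝ) < 2*a))]
end
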